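/- arXiv:2602.06096 — 7 statements merged into one kernel-verified Lean document; each statement's English description precedes it below -/
import Mathlib

section
/- Let G and H be finite groups and m a positive integer. Then D_m(G × H) = D_m(G) × D_m(H), where D_m(K) = {x ∈ L_m(K) : for all y ∈ L_m(K), o(xy) divides m}. -/
/-- `D_m(K) = {x ∈ K : x^m = 1 ∧ ∀ y, y^m = 1 → o(xy) ∣ m}`. -/
def setD (K : Type*) [Group K] (m : ℕ) : Set K :=
  {x | x ^ m = 1 ∧ ∀ y : K, y ^ m = 1 → orderOf (x * y) ∣ m}

/-- `D_m(G × H) = D_m(G) × D_m(H)` for finite groups `G`, `H`. -/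
theorem stmt1 (G H : Type*) [Group G] [Group H] [Finite G] [Finite H]
    (m : ℕ) (hm : 0 < m) :
    setD (G × H) m = (setD G m) ×ˢ (setD H m) := by
  ext ⟨g, h⟩
  simp only [setD, Set.mem_setOf_eq, Set.mem_prod, Prod.pow_mk, Prod.mk_eq_one,
    orderOf_dvd_iff_pow_eq_one, Prod.forall, Prod.mk_mul_mk, mul_pow] at *
  constructor
  · rintro ⟨⟨hg, hh⟩, hxy⟩
    refine ⟨⟨hg, fun a ha => ?_⟩, ⟨hh, fun b hb => ?_⟩⟩
    · exact (hxy a 1 ⟨ha, one_pow m⟩).1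
    · exact (hxy 1 b ⟨one_pow m, hb⟩).2
  · rintro ⟨⟨hg, hg'⟩, ⟨hh, hh'⟩⟩
    exact ⟨⟨hg, hh⟩, fun a b ⟨ha, hb⟩ => ⟨hg' a ha, hh' b hb⟩⟩
end

section
/- Let G and H be finite groups and m, n coprime positive integers. Then D_{m,n}(G × H) ⊆ D_{m,n}(G) × D_{m,n}(H). -/
/-- `D_{m,n}(K) = {x ∈ K : x^m = 1 ∧ ∀ u ≠ 1 with u^n = 1, o(xu) ∣ n}`. -/
def setDD (K : Type*) [Group K] (m n : ℕ) : Set K :=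
  {x | x ^ m = 1 ∧ ∀ u : K, u ^ n = 1 → u ≠ 1 → orderOf (x * u) ∣ n}

/-- `D_{m,n}(G × H) ⊆ D_{m,n}(G) × D_{m,n}(H)`. -/
theorem stmt2 (G H : Type*) [Group G] [Group H] [Finite G] [Finite H]
    (m n : ℕ) (hm : 0 < m) (hn : 0 < n) (hcop : Nat.Coprime m n) :
    setDD (G × H) m n ⊆ (setDD G m n) ×ˢ (setDD H m n) := by
  rintro ⟨g, h⟩ ⟨hpow, hdiv⟩
  have hg : g ^ m = 1 := congrArg Prod.fst hpow
  have hh : h ^ m = 1 := congrArg Prod.snd hpow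
  constructor
  · refine ⟨hg, fun u hu hu1 => ?_⟩
    have := hdiv (u, 1) (by simp [Prod.ext_iff, hu]) (by simp [hu1])
    rw [orderOf_dvd_iff_pow_eq_one] at this ⊢
    exact congrArg Prod.fst this
  · refine ⟨hh, fun u hu hu1 => ?_⟩
    have := hdiv (1, u) (by simp [Prod.ext_iff, hu]) (by simp [hu1])
    rw [orderOf_dvd_iff_pow_eq_one] at this ⊢
    exact congrArg Prod.snd this
end

section
/- Let G be a finite group and m a positive integer. Then D_m(G) is a subgroup of G: it contains 1, is closed under inverses, and is closed under products. -/
lemma orderOf_mul_comm' {K : Type*} [Group K] (a b : K) :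
    orderOf (a * b) = orderOf (b * a) :=
  (SemiconjBy.orderOf_eq a (show a * (b * a) = (a * b) * a by rw [mul_assoc])).symm

/-- `D_m(G)` is a subgroup of `G`: it contains `1`, is closed under
inverses and closed under products. -/
theorem stmt6 (G : Type*) [Group G] [Finite G] (m : ℕ) (hm : 0 < m) :
    (1 : G) ∈ setD G m ∧
    (∀ x ∈ setD G m, x⁻¹ ∈ setD G m) ∧
    (∀ x ∈ setD G m, ∀ y ∈ setD G m, x * y ∈ setD G m) := by
  refine ⟨⟨one_pow m, fun y hy => by simpa using orderOf_dvd_of_pow_eq_one hy⟩, ?_, ?_⟩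
  · rintro x ⟨hx1, hx2⟩
    refine ⟨by rw [inv_pow, hx1, inv_one], fun y hy => ?_⟩
    have h1 : orderOf (x⁻¹ * y) = orderOf (x * y⁻¹) := by
      rw [← orderOf_inv (x⁻¹ * y), mul_inv_rev, inv_inv, orderOf_mul_comm']
    rw [h1]
    exact hx2 y⁻¹ (by rw [inv_pow, hy, inv_one])
  · rintro x ⟨hx1, hx2⟩ y ⟨hy1, hy2⟩
    refine ⟨orderOf_dvd_iff_pow_eq_one.mp (by simpa using hx2 y hy1), fun z hz => ?_⟩
    have hyz : (y * z) ^ m = 1 := orderOf_dvd_iff_pow_eq_one.mp (hy2 z hz)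
    rw [mul_assoc]
    exact hx2 (y * z) hyz
end

section
/- Let G be a finite group of order mn with gcd(m,n)=1, and let x ∈ G be a nontrivial element with x^n = 1. Then for every nontrivial y ∈ D_{m,n}(G), no nontrivial power of x centralizes y; equivalently, the subgroup D_{m,n}(G)⟨x⟩ is a Frobenius group with kernel D_{m,n}(G) (whenever D_{m,n}(G) ≠ 1 and x ∉ D_{m,n}(G)). -/
/-- for a finite group `G` of order `mn` with `gcd(m,n) = 1` and a
nontrivial `x` with `x^n = 1`, no nontrivial power of `x` centralizes any
nontrivial element of `D_{m,n}(G)`; i.e. `D_{m,n}(G)⟨x⟩` is Frobenius with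
kernel `D_{m,n}(G)`. -/
theorem stmt10 (G : Type*) [Group G] [Finite G] (m n : ℕ) (hm : 0 < m) (hn : 0 < n)
    (hcop : Nat.Coprime m n) (hcard : Nat.card G = m * n)
    (x : G) (hx1 : x ≠ 1) (hxn : x ^ n = 1) :
    ∀ y ∈ setDD G m n, y ≠ 1 → ∀ i : ℕ, x ^ i ≠ 1 → ¬ Commute (x ^ i) y := by
  rintro y ⟨hym, hyD⟩ hy1 i hxi hcomm
  have hxin : (x ^ i) ^ n = 1 := by
    rw [← pow_mul, mul_comm, pow_mul, hxn, one_pow]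
  have hoy : orderOf y ∣ m := orderOf_dvd_of_pow_eq_one hym
  have hox : orderOf (x ^ i) ∣ n := orderOf_dvd_of_pow_eq_one hxin
  have hc : Nat.Coprime (orderOf y) (orderOf (x ^ i)) :=
    Nat.Coprime.coprime_dvd_right hox (Nat.Coprime.coprime_dvd_left hoy hcop)
  have hmul : orderOf (y * x ^ i) = orderOf y * orderOf (x ^ i) :=
    Commute.orderOf_mul_eq_mul_orderOf_of_coprime hcomm.symm hc
  have hdvd : orderOf (y * x ^ i) ∣ n := hyD (x ^ i) hxin hxi
  rw [hmul] at hdvd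
  have : orderOf y ∣ n := dvd_trans (dvd_mul_right _ _) hdvd
  have : orderOf y = 1 := Nat.eq_one_of_dvd_coprimes hcop hoy this
  exact hy1 (orderOf_eq_one_iff.mp this)
end

section
/- Let G = K ⋊ H be a finite Frobenius group with kernel K and complement H, i.e., K is normal, K ∩ H = 1, G = KH, and C_G(h) ∩ K = 1 for all nontrivial h ∈ H. Then for every x ∈ K and every nontrivial y ∈ H, o(xy) = o(y). -/
/-- in a finite Frobenius group `G = K ⋊ H` (kernel `K`, complement
`H`), `o(xy) = o(y)` for all `x ∈ K` and nontrivial `y ∈ H`. -/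
theorem stmt12 (G : Type*) [Group G] [Finite G] (K H : Subgroup G) [K.Normal]
    (hKH : K ⊓ H = ⊥) (hKHtop : K ⊔ H = ⊤)
    (hfrob : ∀ h ∈ H, h ≠ 1 → ∀ k ∈ K, Commute k h → k = 1) :
    ∀ x ∈ K, ∀ y ∈ H, y ≠ 1 → orderOf (x * y) = orderOf y := by
  intro x hx y hy hyne
  -- the map k ↦ k⁻¹ * (y k y⁻¹) on K
  have hN : K.Normal := inferInstance
  let f : K → K := fun k =>
    ⟨(k : G)⁻¹ * (y * k * y⁻¹), K.mul_mem (K.inv_mem k.2) (hN.conj_mem k k.2 y)⟩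
  have hinj : Function.Injective f := by
    intro k1 k2 h
    have h' : (k1 : G)⁻¹ * (y * k1 * y⁻¹) = (k2 : G)⁻¹ * (y * k2 * y⁻¹) :=
      congrArg Subtype.val h
    have hc : Commute ((k2 : G) * (k1 : G)⁻¹) y := by
      have : (k2 : G) * (k1 : G)⁻¹ = y * ((k2 : G) * (k1 : G)⁻¹) * y⁻¹ := by
        calc (k2 : G) * (k1 : G)⁻¹
            = k2 * ((k1:G)⁻¹ * (y * k1 * y⁻¹)) * (y * k1 * y⁻¹)⁻¹ := by group
          _ = k2 * ((k2:G)⁻¹ * (y * k2 * y⁻¹)) * (y * k1 * y⁻¹)⁻¹ := by rw [h']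
          _ = y * (k2 * (k1:G)⁻¹) * y⁻¹ := by group
      show (k2 : G) * (k1 : G)⁻¹ * y = y * ((k2 : G) * (k1 : G)⁻¹)
      conv_lhs => rw [this]
      group
    have := hfrob y hy hyne _ (K.mul_mem k2.2 (K.inv_mem k1.2)) hc
    have : (k2 : G) = k1 := by
      have := mul_inv_eq_one.mp this
      exact this
    exact (Subtype.ext this).symm
  have hsurj : Function.Surjective f := Finite.surjective_of_injective hinj
  obtain ⟨k, hk⟩ := hsurj ⟨x, hx⟩
  have hk' : (k : G)⁻¹ * (y * k * y⁻¹) = x := congrArg Subtype.val hk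
  have hsc : SemiconjBy (k : G) (x * y) y := by
    unfold SemiconjBy
    rw [← hk']; group
  exact SemiconjBy.orderOf_eq _ hsc
end

section
/- Let G be a finite Frobenius group with kernel K of order m and complement H of order n (so |G| = mn, gcd(m,n) = 1). Then for every x ∈ L_m(G) and every nontrivial y ∈ L_n(G), every prime dividing o(xy) divides o(y). -/
open scoped Pointwise


/-- in a finite Frobenius group `G = K ⋊ H` with `|K| = m`,
`|H| = n`, `gcd(m,n) = 1`, every prime dividing `o(xy)` divides `o(y)` whenever
`x^m = 1`, `y^n = 1` and `y ≠ 1`. -/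
theorem stmt14 (G : Type*) [Group G] [Finite G] (m n : ℕ) (hcop : Nat.Coprime m n)
    (K H : Subgroup G) [K.Normal] (hK : Nat.card K = m) (hH : Nat.card H = n)
    (hKH : K ⊓ H = ⊥) (hKHtop : K ⊔ H = ⊤)
    (hfrob : ∀ h ∈ H, h ≠ 1 → ∀ k ∈ K, Commute k h → k = 1) :
    ∀ x y : G, x ^ m = 1 → y ^ n = 1 → y ≠ 1 →
      ∀ p : ℕ, p.Prime → p ∣ orderOf (x * y) → p ∣ orderOf y := by
  -- every element of G is a product k * h
  have hdecomp : ∀ g : G, ∃ k ∈ K, ∃ h ∈ H, g = k * h := by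
    intro g
    have hg : g ∈ (K : Set G) * (H : Set G) := by
      rw [← Subgroup.normal_mul, hKHtop]; trivial
    obtain ⟨k, hk, h, hh, rfl⟩ := hg
    exact ⟨k, hk, h, hh, rfl⟩
  have inst : K.Normal := inferInstance
  -- every element outside K is K-conjugate to a nontrivial element of H,
  -- hence: any element of K commuting with an element outside K is 1.
  have hC : ∀ w ∈ K, ∀ v : G, v ∉ K → Commute w v → w = 1 := by
    intro w hw v hv hcomm
    obtain ⟨k, hk, h, hh, rfl⟩ := hdecomp v
    have hne : h ≠ 1 := by
      rintro rfl
      rw [mul_one] at hv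
      exact hv hk
    -- the map u ↦ u⁻¹ * (h * u * h⁻¹) on K is injective, hence surjective
    let f : K → K := fun u => ⟨(u : G)⁻¹ * (h * u * h⁻¹),
      K.mul_mem (K.inv_mem u.2) (inst.conj_mem _ u.2 h)⟩
    have hinj : Function.Injective f := by
      intro a b heq
      have heq' : (a : G)⁻¹ * (h * a * h⁻¹) = (b : G)⁻¹ * (h * b * h⁻¹) :=
        congrArg Subtype.val heq
      have h1 : (a : G)⁻¹ * h * (a : G) = (b : G)⁻¹ * h * (b : G) := by
        have := congrArg (· * h) heq'
        simpa [mul_assoc] using this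
      have hcom : Commute ((b : G) * (a : G)⁻¹) h := by
        show (b : G) * (a : G)⁻¹ * h = h * ((b : G) * (a : G)⁻¹)
        calc (b : G) * (a : G)⁻¹ * h
            = (b : G) * ((a : G)⁻¹ * h * (a : G)) * (a : G)⁻¹ := by group
          _ = (b : G) * ((b : G)⁻¹ * h * (b : G)) * (a : G)⁻¹ := by rw [h1]
          _ = h * ((b : G) * (a : G)⁻¹) := by group
      have := hfrob h hh hne _ (K.mul_mem b.2 (K.inv_mem a.2)) hcom
      exact (Subtype.ext (mul_inv_eq_one.mp this)).symm
    have hsurj : Function.Surjective f := Finite.surjective_of_injective hinj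
    obtain ⟨u, hu⟩ := hsurj ⟨k, hk⟩
    have hu' : (u : G)⁻¹ * (h * u * h⁻¹) = k := congrArg Subtype.val hu
    have hv' : k * h = (u : G)⁻¹ * h * u := by
      rw [← hu']; group
    rw [hv'] at hcomm
    have hcom2 : Commute ((u : G) * w * (u : G)⁻¹) h := by
      show (u : G) * w * (u : G)⁻¹ * h = h * ((u : G) * w * (u : G)⁻¹)
      have hc : w * ((u : G)⁻¹ * h * u) = ((u : G)⁻¹ * h * u) * w := hcomm
      calc (u : G) * w * (u : G)⁻¹ * h
          = (u : G) * (w * ((u : G)⁻¹ * h * u)) * (u : G)⁻¹ := by group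
        _ = (u : G) * (((u : G)⁻¹ * h * u) * w) * (u : G)⁻¹ := by rw [hc]
        _ = h * ((u : G) * w * (u : G)⁻¹) := by group
    have := hfrob h hh hne _ (K.mul_mem (K.mul_mem u.2 hw) (K.inv_mem u.2)) hcom2
    have : (u : G) * w * (u : G)⁻¹ = (u : G) * 1 * (u : G)⁻¹ := by
      rw [this]; group
    have := mul_left_cancel (mul_right_cancel this)
    simpa using this
  -- now the main argument
  intro x y hx hy hy1 p hp hpd
  have hm0 : m ≠ 0 := by rw [← hK]; exact Nat.card_pos.ne'
  have hn0 : n ≠ 0 := by rw [← hH]; exact Nat.card_pos.ne'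
  -- card of quotient is n
  have hcardQ : Nat.card (G ⧸ K) = n := by
    let φ : H →* G ⧸ K := (QuotientGroup.mk' K).comp H.subtype
    have hinj : Function.Injective φ := by
      rw [injective_iff_map_eq_one]
      intro a ha
      have haK : (a : G) ∈ K := (QuotientGroup.eq_one_iff _).mp ha
      have : (a : G) ∈ K ⊓ H := ⟨haK, a.2⟩
      rw [hKH] at this
      exact Subtype.ext this
    have hsurj : Function.Surjective φ := by
      intro q
      induction q using QuotientGroup.induction_on with
      | H g =>
        obtain ⟨k, hk, h, hh, rfl⟩ := hdecomp g
        refine ⟨⟨h, hh⟩, ?_⟩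
        show QuotientGroup.mk h = QuotientGroup.mk (k * h)
        rw [QuotientGroup.eq]
        simpa [mul_assoc] using inst.conj_mem _ hk h⁻¹
    rw [← hH]
    exact Nat.card_congr (Equiv.ofBijective ⇑φ ⟨hinj, hsurj⟩).symm
  -- x ∈ K
  have hxK : x ∈ K := by
    rw [← QuotientGroup.eq_one_iff x, ← orderOf_eq_one_iff]
    have d1 : orderOf ((x : G) : G ⧸ K) ∣ m :=
      orderOf_dvd_of_pow_eq_one (by rw [← QuotientGroup.mk_pow, hx]; rfl)
    have d2 : orderOf ((x : G) : G ⧸ K) ∣ n := hcardQ ▸ orderOf_dvd_natCard _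
    exact Nat.dvd_one.mp (hcop ▸ Nat.dvd_gcd d1 d2)
  -- y ∉ K
  have hyK : y ∉ K := by
    intro hyK
    apply hy1
    rw [← orderOf_eq_one_iff]
    have d1 : orderOf y ∣ m := by
      rw [← hK]
      exact Subgroup.orderOf_dvd_natCard K hyK
    have d2 : orderOf y ∣ n := orderOf_dvd_of_pow_eq_one hy
    exact Nat.dvd_one.mp (hcop ▸ Nat.dvd_gcd d1 d2)
  -- x * y ∉ K
  have hgK : x * y ∉ K := by
    intro hg
    exact hyK (by simpa using K.mul_mem (K.inv_mem hxK) hg)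
  -- (x*y)^(orderOf y) ∈ K
  have hpow : (x * y) ^ orderOf y ∈ K := by
    rw [← QuotientGroup.eq_one_iff]
    have : ((x * y : G) : G ⧸ K) = ((y : G) : G ⧸ K) := by
      rw [QuotientGroup.eq]
      simpa [mul_assoc] using inst.conj_mem _ (K.inv_mem hxK) y⁻¹
    rw [QuotientGroup.mk_pow, this, ← QuotientGroup.mk_pow, pow_orderOf_eq_one]
    rfl
  -- hence (x*y)^(orderOf y) = 1
  have hone : (x * y) ^ orderOf y = 1 :=
    hC _ hpow (x * y) hgK ((Commute.refl (x * y)).pow_left (orderOf y))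
  exact hpd.trans (orderOf_dvd_of_pow_eq_one hone)
end

section
/- Let G be a finite group of order mn with gcd(m,n) = 1. Then D_{m,n}(G/D_{m,n}(G)) is the trivial subgroup. -/
/-- Decompose an element killed by `m * n` (with `m`, `n` coprime) into commuting
`m`-part and `n`-part, each a power of `y ^ n`, `y ^ m` respectively. -/
lemma split_coprime {G : Type*} [Group G] (m n : ℕ) (hcop : Nat.Coprime m n) (y : G)
    (hy : y ^ (m * n) = 1) :
    ∃ a b : G, y = a * b ∧ a ∈ Subgroup.zpowers (y ^ n) ∧ b ∈ Subgroup.zpowers (y ^ m) ∧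
      a ^ m = 1 ∧ b ^ n = 1 := by
  have hbez : (m : ℤ) * Nat.gcdA m n + (n : ℤ) * Nat.gcdB m n = 1 := by
    have h := Nat.gcd_eq_gcd_ab m n
    rw [hcop] at h
    exact_mod_cast h.symm
  set s := Nat.gcdA m n with hs
  set t := Nat.gcdB m n with ht
  have hymn : y ^ ((m : ℤ) * n) = 1 := by
    rw [← Int.natCast_mul, zpow_natCast, hy]
  refine ⟨(y ^ n) ^ t, (y ^ m) ^ s, ?_, ⟨t, rfl⟩, ⟨s, rfl⟩, ?_, ?_⟩
  · have : (y ^ n) ^ t * (y ^ m) ^ s = y ^ ((n : ℤ) * t + (m : ℤ) * s) := by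
      rw [zpow_add, ← zpow_natCast y n, ← zpow_natCast y m, ← zpow_mul, ← zpow_mul]
    rw [this, add_comm, hbez, zpow_one]
  · have : ((y ^ n) ^ t) ^ m = y ^ (((m : ℤ) * n) * t) := by
      rw [← zpow_natCast y n, ← zpow_mul, ← zpow_natCast ((y : G) ^ ((n : ℤ) * t)) m,
        ← zpow_mul]
      ring_nf
    rw [this, zpow_mul, hymn, one_zpow]
  · have : ((y ^ m) ^ s) ^ n = y ^ (((m : ℤ) * n) * s) := by
      rw [← zpow_natCast y m, ← zpow_mul, ← zpow_natCast ((y : G) ^ ((m : ℤ) * s)) n,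
        ← zpow_mul]
      ring_nf
    rw [this, zpow_mul, hymn, one_zpow]

/-- `D_{m,n}(G / D_{m,n}(G))` is trivial. Here `N` is the (normal)
subgroup of `G` whose underlying set is `D_{m,n}(G)`. -/
theorem stmt15 (G : Type*) [Group G] [Finite G] (m n : ℕ) (hm : 0 < m) (hn : 0 < n)
    (hcop : Nat.Coprime m n) (hcard : Nat.card G = m * n)
    (N : Subgroup G) [N.Normal] (hN : (N : Set G) = setDD G m n) :
    setDD (G ⧸ N) m n = {1} := by
  have hmemN : ∀ g : G, g ∈ N → g ∈ setDD G m n := by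
    intro g hg
    rw [← hN]
    exact hg
  have hNm : ∀ g : G, g ∈ N → g ^ m = 1 := fun g hg => (hmemN g hg).1
  -- an element killed by both m and n is trivial
  have htriv : ∀ g : G, g ^ m = 1 → g ^ n = 1 → g = 1 := by
    intro g h1 h2
    have d1 := orderOf_dvd_of_pow_eq_one h1
    have d2 := orderOf_dvd_of_pow_eq_one h2
    have := Nat.dvd_gcd d1 d2
    rw [hcop] at this
    exact orderOf_eq_one_iff.mp (Nat.dvd_one.mp this)
  ext xb
  simp only [Set.mem_singleton_iff]
  constructor
  · rintro ⟨hxm, hxD⟩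
    obtain ⟨x, rfl⟩ := QuotientGroup.mk_surjective xb
    have hxmN : x ^ m ∈ N := by
      rw [← QuotientGroup.eq_one_iff]
      rw [← hxm]
      rfl
    have hxmn : x ^ (m * n) = 1 := by rw [← hcard]; exact pow_card_eq_one'
    -- x itself satisfies x ^ m = 1
    obtain ⟨a, b, hab, ha, hb, ham, hbn⟩ := split_coprime m n hcop x hxmn
    have hbN : b ∈ N := (Subgroup.zpowers_le.mpr hxmN) hb
    have hb1 : b = 1 := htriv b (hNm b hbN) hbn
    have hxm1 : x ^ m = 1 := by rw [hab, hb1, mul_one]; exact ham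
    -- show x ∈ setDD G m n, i.e. x ∈ N
    have hxD' : x ∈ setDD G m n := by
      refine ⟨hxm1, ?_⟩
      intro u hu hu1
      have huN : u ∉ N := fun h => hu1 (htriv u (hNm u h) hu)
      have hmku : (QuotientGroup.mk u : G ⧸ N) ≠ 1 := fun h =>
        huN (QuotientGroup.eq_one_iff u |>.mp h)
      have hmkun : (QuotientGroup.mk u : G ⧸ N) ^ n = 1 := by
        have : (QuotientGroup.mk (u ^ n) : G ⧸ N) = 1 := by
          rw [hu]; rfl
        rw [← this]; rfl
      have hdvd := hxD (QuotientGroup.mk u) hmkun hmku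
      have hyN : (x * u) ^ n ∈ N := by
        rw [← QuotientGroup.eq_one_iff]
        have : ((QuotientGroup.mk (x * u) : G ⧸ N)) ^ n = 1 :=
          orderOf_dvd_iff_pow_eq_one.mp hdvd
        rw [← this]; rfl
      have hymn : (x * u) ^ (m * n) = 1 := by rw [← hcard]; exact pow_card_eq_one'
      obtain ⟨a', b', hab', ha', hb', ham', hbn'⟩ := split_coprime m n hcop (x * u) hymn
      have ha'N : a' ∈ N := (Subgroup.zpowers_le.mpr hyN) ha'
      by_cases hb'1 : b' = 1
      · -- x * u ∈ N; use its D-property against u⁻¹ to get x = 1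
        have hyNmem : x * u ∈ N := by rw [hab', hb'1, mul_one]; exact ha'N
        have hyDD := hmemN _ hyNmem
        have huinv : (u⁻¹ : G) ^ n = 1 := by rw [inv_pow, hu, inv_one]
        have hx1 : x = 1 := by
          have := hyDD.2 u⁻¹ huinv (inv_ne_one.mpr hu1)
          rw [mul_inv_cancel_right] at this
          exact htriv x hxm1 (orderOf_dvd_iff_pow_eq_one.mp this)
        rw [hx1, one_mul]
        exact orderOf_dvd_of_pow_eq_one hu
      · have := (hmemN a' ha'N).2 b' hbn' hb'1
        rwa [← hab'] at this
    rw [QuotientGroup.eq_one_iff]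
    rw [← hN] at hxD'
    exact hxD'
  · rintro rfl
    refine ⟨one_pow m, fun u hu _ => ?_⟩
    rw [one_mul]
    exact orderOf_dvd_of_pow_eq_one hu
end
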